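/- Let E be a real inner product space, let θ > 0, λ₁ > 1/2, λ₂ > 2 + 1/(2θ), D ≥ 0, R ≥ 0, and set κ = 2·min(λ₁ − 1/2, λ₂ − 2 − 1/(2θ)). Let x₁, x₂, y₁, y₂ : ℝ → E be curves and δ₁, δ₂, r₁, r₂, υ, υ′ : ℝ → E be functions with ‖δ₁(t)‖ ≤ D, ‖δ₂(t)‖ ≤ D, ‖r₁(t)‖ ≤ R, ‖r₂(t)‖ ≤ R for all t. Suppose at a time t the curves are differentiable with x₁′(t) = x₂(t), x₂′(t) = δ₁(t) − (λ₁ + λ₂)·x₂(t) − λ₁λ₂·x₁(t) + υ(t) + r₁(t), y₁′(t) = y₂(t), y₂′(t) = δ₂(t) − (λ₁ + λ₂)·y₂(t) − λ₁λ₂·y₁(t) + υ′(t) + r₂(t). Define W(s) = (1/2)‖x₁(s) − y₁(s)‖² + (1/2)‖x₂(s) + λ₁x₁(s) − y₂(s) − λ₁y₁(s)‖². Then W is differentiable at t and W′(t) ≤ −κ·W(t) + (1/2)‖υ(t) − υ′(t)‖² + D² + 2θ·R². -/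

import Mathlib

open scoped RealInnerProductSpace

set_option maxHeartbeats 2000000 in
/-- Lyapunov-decay step of Theorem 2: along the closed-loop error dynamics
the Lyapunov function W satisfies W′ ≤ −κW + ½‖υ−υ′‖² + D² + 2θR². -/
theorem lyapunov_decay_step
    {E : Type*} [NormedAddCommGroup E] [InnerProductSpace ℝ E]
    (θ l₁ l₂ D R κ : ℝ) (hθ : 0 < θ) (hl₁ : 1 / 2 < l₁)
    (hl₂ : 2 + 1 / (2 * θ) < l₂) (hD : 0 ≤ D) (hR : 0 ≤ R)
    (hκ : κ = 2 * min (l₁ - 1 / 2) (l₂ - 2 - 1 / (2 * θ)))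
    (x₁ x₂ y₁ y₂ δ₁ δ₂ r₁ r₂ υ υ' : ℝ → E)
    (hδ₁ : ∀ t, ‖δ₁ t‖ ≤ D) (hδ₂ : ∀ t, ‖δ₂ t‖ ≤ D)
    (hr₁ : ∀ t, ‖r₁ t‖ ≤ R) (hr₂ : ∀ t, ‖r₂ t‖ ≤ R)
    (t : ℝ)
    (hx₁ : HasDerivAt x₁ (x₂ t) t)
    (hx₂ : HasDerivAt x₂
      (δ₁ t - (l₁ + l₂) • x₂ t - (l₁ * l₂) • x₁ t + υ t + r₁ t) t)
    (hy₁ : HasDerivAt y₁ (y₂ t) t)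
    (hy₂ : HasDerivAt y₂
      (δ₂ t - (l₁ + l₂) • y₂ t - (l₁ * l₂) • y₁ t + υ' t + r₂ t) t)
    (W : ℝ → ℝ)
    (hW : W = fun s => (1 / 2) * ‖x₁ s - y₁ s‖ ^ 2
      + (1 / 2) * ‖x₂ s + l₁ • x₁ s - y₂ s - l₁ • y₁ s‖ ^ 2) :
    ∃ w : ℝ, HasDerivAt W w t ∧
      w ≤ -κ * W t + (1 / 2) * ‖υ t - υ' t‖ ^ 2 + D ^ 2 + 2 * θ * R ^ 2 := by
  set a : E := x₁ t - y₁ t with ha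
  set b : E := x₂ t + l₁ • x₁ t - y₂ t - l₁ • y₁ t with hb
  -- error dynamics
  have he₁ : HasDerivAt (fun s => x₁ s - y₁ s) (b - l₁ • a) t := by
    have h := hx₁.sub hy₁
    convert h using 1
    · rfl
    rw [ha, hb]; module
  have he₂ : HasDerivAt (fun s => x₂ s + l₁ • x₁ s - y₂ s - l₁ • y₁ s)
      ((δ₁ t - δ₂ t) + (υ t - υ' t) + (r₁ t - r₂ t) - l₂ • b) t := by
    have h := ((hx₂.add (hx₁.const_smul l₁)).sub hy₂).sub (hy₁.const_smul l₁)
    convert h using 1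
    · rfl
    rw [hb]; module
  -- W as inner products
  have hWeq : W = fun s => (1 / 2) * ⟪x₁ s - y₁ s, x₁ s - y₁ s⟫
      + (1 / 2) * ⟪x₂ s + l₁ • x₁ s - y₂ s - l₁ • y₁ s,
          x₂ s + l₁ • x₁ s - y₂ s - l₁ • y₁ s⟫ := by
    rw [hW]; funext s; rw [real_inner_self_eq_norm_sq, real_inner_self_eq_norm_sq]
  have hWd : HasDerivAt W
      ((1 / 2) * (⟪a, b - l₁ • a⟫ + ⟪b - l₁ • a, a⟫)
        + (1 / 2) * (⟪b, (δ₁ t - δ₂ t) + (υ t - υ' t) + (r₁ t - r₂ t) - l₂ • b⟫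
            + ⟪(δ₁ t - δ₂ t) + (υ t - υ' t) + (r₁ t - r₂ t) - l₂ • b, b⟫)) t := by
    rw [hWeq]
    exact ((he₁.inner ℝ he₁).const_mul (1/2)).add ((he₂.inner ℝ he₂).const_mul (1/2))
  refine ⟨_, hWd, ?_⟩
  -- now the inequality
  have hWt : W t = (1 / 2) * ‖a‖ ^ 2 + (1 / 2) * ‖b‖ ^ 2 := by rw [hW]
  rw [hWt]
  have key : (1 / 2) * (⟪a, b - l₁ • a⟫ + ⟪b - l₁ • a, a⟫)
        + (1 / 2) * (⟪b, (δ₁ t - δ₂ t) + (υ t - υ' t) + (r₁ t - r₂ t) - l₂ • b⟫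
            + ⟪(δ₁ t - δ₂ t) + (υ t - υ' t) + (r₁ t - r₂ t) - l₂ • b, b⟫)
      = ⟪a, b⟫ - l₁ * ‖a‖ ^ 2 + ⟪b, δ₁ t - δ₂ t⟫ + ⟪b, υ t - υ' t⟫
        + ⟪b, r₁ t - r₂ t⟫ - l₂ * ‖b‖ ^ 2 := by
    simp only [inner_sub_right, inner_sub_left, inner_add_right, inner_add_left,
      inner_smul_right, inner_smul_left, RCLike.conj_to_real,
      real_inner_self_eq_norm_sq, real_inner_comm b a, real_inner_comm (δ₁ t - δ₂ t) b,
      real_inner_comm (υ t - υ' t) b, real_inner_comm (r₁ t - r₂ t) b]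
    ring
  rw [key]
  have h1 : ⟪a, b⟫ ≤ (1/2) * ‖a‖ ^ 2 + (1/2) * ‖b‖ ^ 2 := by
    have := real_inner_le_norm a b
    nlinarith [norm_nonneg a, norm_nonneg b, sq_nonneg (‖a‖ - ‖b‖)]
  have hδ : ‖δ₁ t - δ₂ t‖ ≤ 2 * D := by
    calc ‖δ₁ t - δ₂ t‖ ≤ ‖δ₁ t‖ + ‖δ₂ t‖ := norm_sub_le _ _
    _ ≤ 2 * D := by linarith [hδ₁ t, hδ₂ t]
  have hr : ‖r₁ t - r₂ t‖ ≤ 2 * R := by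
    calc ‖r₁ t - r₂ t‖ ≤ ‖r₁ t‖ + ‖r₂ t‖ := norm_sub_le _ _
    _ ≤ 2 * R := by linarith [hr₁ t, hr₂ t]
  have h2 : ⟪b, δ₁ t - δ₂ t⟫ ≤ ‖b‖ ^ 2 + D ^ 2 := by
    have h := real_inner_le_norm b (δ₁ t - δ₂ t)
    nlinarith [norm_nonneg b, norm_nonneg (δ₁ t - δ₂ t), sq_nonneg (‖b‖ - D)]
  have h3 : ⟪b, υ t - υ' t⟫ ≤ (1/2) * ‖b‖ ^ 2 + (1/2) * ‖υ t - υ' t‖ ^ 2 := by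
    have := real_inner_le_norm b (υ t - υ' t)
    nlinarith [sq_nonneg (‖b‖ - ‖υ t - υ' t‖)]
  have h4 : ⟪b, r₁ t - r₂ t⟫ ≤ (1 / (2 * θ)) * ‖b‖ ^ 2 + 2 * θ * R ^ 2 := by
    have h := real_inner_le_norm b (r₁ t - r₂ t)
    have hb2 : ⟪b, r₁ t - r₂ t⟫ ≤ 2 * R * ‖b‖ := by
      calc ⟪b, r₁ t - r₂ t⟫ ≤ ‖b‖ * ‖r₁ t - r₂ t‖ := h
      _ ≤ 2 * R * ‖b‖ := by
          rw [mul_comm ‖b‖]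
          exact mul_le_mul_of_nonneg_right hr (norm_nonneg b)
    have key2 : 2 * R * ‖b‖ ≤ (1 / (2 * θ)) * ‖b‖ ^ 2 + 2 * θ * R ^ 2 := by
      have hinv : (1 / (2 * θ)) * (2 * θ) = 1 := by field_simp
      nlinarith [sq_nonneg (‖b‖ - 2 * θ * R), hθ, hinv, sq_nonneg ‖b‖,
        mul_pos hθ hθ]
    linarith
  have hκ1 : κ / 2 ≤ l₁ - 1 / 2 := by rw [hκ]; have := min_le_left (l₁ - 1/2) (l₂ - 2 - 1/(2*θ)); linarith
  have hκ2 : κ / 2 ≤ l₂ - 2 - 1 / (2 * θ) := by rw [hκ]; have := min_le_right (l₁ - 1/2) (l₂ - 2 - 1/(2*θ)); linarith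
  have ha2 := mul_le_mul_of_nonneg_right hκ1 (sq_nonneg ‖a‖)
  have hb2' := mul_le_mul_of_nonneg_right hκ2 (sq_nonneg ‖b‖)
  linarith
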